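/- arXiv:1311.5446 — 3 statements merged into one kernel-verified Lean document; each statement's English description precedes it below -/
import Mathlib

section
/- Let w : ℝ^N × ℝ^N → ℝ satisfy: (a) for every x, y ↦ w(x,y) ∈ L¹(ℝ^N) with sup_x ‖w(x,·)‖_{L¹} ≤ C_w; (b) there exists a non-negative ρ_w ∈ L¹(ℝ^N) ∩ L^∞(ℝ^N) and Λ_w > 0 with ∫ |w(x,y)| ρ_w(x) dx ≤ Λ_w ρ_w(y) for all y. Let G : ℝ → ℝ be Lipschitz with constant C_G. Then F(h)(x) = ∫ w(x,y) G(h(y)) dy defines a Lipschitz map from L²(ℝ^N, ρ_w) to itself with Lipschitz constant at most C_G (Λ_w C_w)^{1/2}. -/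
open MeasureTheory


lemma aux_holder {α : Type*} [MeasurableSpace α] {μ : Measure α} {φ ψ : α → ℝ}
    (hφ : Measurable φ) (hψ : Measurable ψ) :
    ∫⁻ y, ENNReal.ofReal |φ y| * ENNReal.ofReal |ψ y| ∂μ ≤
      (∫⁻ y, ENNReal.ofReal |φ y| ∂μ) ^ (1/2:ℝ) *
        (∫⁻ y, ENNReal.ofReal |φ y| * ENNReal.ofReal (ψ y ^ 2) ∂μ) ^ (1/2:ℝ) := by
  have hpq : Real.HolderConjugate 2 2 := ⟨by norm_num, by norm_num, by norm_num⟩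
  have hf : AEMeasurable (fun y => (ENNReal.ofReal |φ y|) ^ (1/2:ℝ)) μ :=
    ((ENNReal.measurable_ofReal.comp hφ.abs).pow_const _).aemeasurable
  have hgE : AEMeasurable (fun y => (ENNReal.ofReal |φ y|) ^ (1/2:ℝ) * ENNReal.ofReal |ψ y|) μ :=
    hf.mul (ENNReal.measurable_ofReal.comp hψ.abs).aemeasurable
  have H := ENNReal.lintegral_mul_le_Lp_mul_Lq μ hpq hf hgE
  have e1 : ∀ y, ((fun y => (ENNReal.ofReal |φ y|) ^ (1/2:ℝ)) *
      (fun y => (ENNReal.ofReal |φ y|) ^ (1/2:ℝ) * ENNReal.ofReal |ψ y|)) y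
      = ENNReal.ofReal |φ y| * ENNReal.ofReal |ψ y| := by
    intro y
    simp only [Pi.mul_apply, ← mul_assoc, ← ENNReal.rpow_add_of_nonneg (1/2:ℝ) (1/2:ℝ)
      (by norm_num) (by norm_num)]
    norm_num
  have e2 : ∀ y, ((ENNReal.ofReal |φ y|) ^ (1/2:ℝ)) ^ (2:ℝ) = ENNReal.ofReal |φ y| := by
    intro y
    rw [← ENNReal.rpow_mul]
    norm_num
  have e3 : ∀ y, ((ENNReal.ofReal |φ y|) ^ (1/2:ℝ) * ENNReal.ofReal |ψ y|) ^ (2:ℝ)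
      = ENNReal.ofReal |φ y| * ENNReal.ofReal (ψ y ^ 2) := by
    intro y
    rw [ENNReal.mul_rpow_of_nonneg _ _ (by norm_num : (0:ℝ) ≤ 2), ← ENNReal.rpow_mul,
      ENNReal.ofReal_rpow_of_nonneg (abs_nonneg _) (by norm_num : (0:ℝ) ≤ 2)]
    norm_num
  calc ∫⁻ y, ENNReal.ofReal |φ y| * ENNReal.ofReal |ψ y| ∂μ
      = ∫⁻ y, ((fun y => (ENNReal.ofReal |φ y|) ^ (1/2:ℝ)) *
        (fun y => (ENNReal.ofReal |φ y|) ^ (1/2:ℝ) * ENNReal.ofReal |ψ y|)) y ∂μ := by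
        simp_rw [e1]
    _ ≤ _ := H.trans_eq (by simp_rw [e2, e3])

lemma aux_pointwise {α : Type*} [MeasurableSpace α] {μ : Measure α} {φ u v d : α → ℝ}
    {CG Cφ : ℝ} (hCG : 0 ≤ CG)
    (hφm : Measurable φ) (hum : Measurable u) (hvm : Measurable v) (hdm : Measurable d)
    (hφint : Integrable φ μ) (hφle : (∫ y, |φ y| ∂μ) ≤ Cφ)
    (huv : ∀ y, |u y - v y| ≤ CG * |d y|) :
    ENNReal.ofReal (((∫ y, φ y * u y ∂μ) - ∫ y, φ y * v y ∂μ) ^ 2) ≤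
      ENNReal.ofReal (CG ^ 2 * Cφ) * ∫⁻ y, ENNReal.ofReal |φ y| * ENNReal.ofReal (d y ^ 2) ∂μ := by
  have hCφ : 0 ≤ Cφ := le_trans (integral_nonneg fun y => abs_nonneg _) hφle
  set K := ∫⁻ y, ENNReal.ofReal |φ y| * ENNReal.ofReal (d y ^ 2) ∂μ with hK
  -- lintegral of |φ| is bounded
  have hP : (∫⁻ y, ENNReal.ofReal |φ y| ∂μ) ≤ ENNReal.ofReal Cφ := by
    rw [← ofReal_integral_eq_lintegral_ofReal hφint.abs (Filter.Eventually.of_forall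
      fun y => abs_nonneg _)]
    exact ENNReal.ofReal_le_ofReal hφle
  -- pointwise: (u-v)^2 ≤ CG^2 d^2
  have hsq : ∀ y, ENNReal.ofReal ((u y - v y) ^ 2) ≤
      ENNReal.ofReal (CG ^ 2) * ENNReal.ofReal (d y ^ 2) := by
    intro y
    rw [← ENNReal.ofReal_mul (by positivity)]
    apply ENNReal.ofReal_le_ofReal
    calc (u y - v y) ^ 2 = |u y - v y| ^ 2 := (sq_abs _).symm
      _ ≤ (CG * |d y|) ^ 2 := by
          apply pow_le_pow_left₀ (abs_nonneg _) (huv y)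
      _ = CG ^ 2 * d y ^ 2 := by rw [mul_pow, sq_abs]
  have hQle : (∫⁻ y, ENNReal.ofReal |φ y| * ENNReal.ofReal ((u y - v y) ^ 2) ∂μ) ≤
      ENNReal.ofReal (CG ^ 2) * K := by
    rw [hK, ← lintegral_const_mul' _ _ ENNReal.ofReal_ne_top]
    refine lintegral_mono fun y => ?_
    calc ENNReal.ofReal |φ y| * ENNReal.ofReal ((u y - v y) ^ 2)
        ≤ ENNReal.ofReal |φ y| * (ENNReal.ofReal (CG ^ 2) * ENNReal.ofReal (d y ^ 2)) :=
          mul_le_mul_right (hsq y) _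
      _ = ENNReal.ofReal (CG ^ 2) * (ENNReal.ofReal |φ y| * ENNReal.ofReal (d y ^ 2)) := by ring
  have hCS := aux_holder (μ := μ) (ψ := fun y => u y - v y) hφm (hum.sub hvm)
  by_cases hint : Integrable (fun y => φ y * (u y - v y)) μ
  · -- main case
    have hsub : |(∫ y, φ y * u y ∂μ) - ∫ y, φ y * v y ∂μ| ≤ ∫ y, |φ y * (u y - v y)| ∂μ := by
      by_cases hu : Integrable (fun y => φ y * u y) μ
      · have hv : Integrable (fun y => φ y * v y) μ :=
          (hu.sub hint).congr (Filter.Eventually.of_forall fun y => by simp; ring)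
        rw [← integral_sub hu hv]
        have : (fun y => φ y * u y - φ y * v y) = fun y => φ y * (u y - v y) := by
          funext y; ring
        rw [this]
        simpa only [Real.norm_eq_abs] using
          norm_integral_le_integral_norm (μ := μ) (fun y => φ y * (u y - v y))
      · have hv : ¬ Integrable (fun y => φ y * v y) μ := by
          intro hv
          exact hu ((hv.add hint).congr (Filter.Eventually.of_forall fun y => by simp; ring))
        rw [integral_undef hu, integral_undef hv]
        simpa using integral_nonneg (μ := μ) (f := fun y => |φ y * (u y - v y)|)
          fun y => abs_nonneg _
    set S := ∫ y, |φ y * (u y - v y)| ∂μ with hS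
    have hS0 : 0 ≤ S := integral_nonneg fun y => abs_nonneg _
    have hSl : ENNReal.ofReal S = ∫⁻ y, ENNReal.ofReal |φ y| * ENNReal.ofReal |u y - v y| ∂μ := by
      rw [hS, ofReal_integral_eq_lintegral_ofReal hint.abs
        (Filter.Eventually.of_forall fun y => abs_nonneg _)]
      congr 1; funext y
      rw [abs_mul, ENNReal.ofReal_mul (abs_nonneg _)]
    have hSbound : ENNReal.ofReal S ≤
        (ENNReal.ofReal Cφ) ^ (1/2:ℝ) * (ENNReal.ofReal (CG ^ 2) * K) ^ (1/2:ℝ) := by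
      rw [hSl]
      refine hCS.trans ?_
      exact mul_le_mul' (ENNReal.rpow_le_rpow hP (by norm_num))
        (ENNReal.rpow_le_rpow hQle (by norm_num))
    calc ENNReal.ofReal (((∫ y, φ y * u y ∂μ) - ∫ y, φ y * v y ∂μ) ^ 2)
        ≤ ENNReal.ofReal (S ^ 2) := by
          apply ENNReal.ofReal_le_ofReal
          calc ((∫ y, φ y * u y ∂μ) - ∫ y, φ y * v y ∂μ) ^ 2
              = |(∫ y, φ y * u y ∂μ) - ∫ y, φ y * v y ∂μ| ^ 2 := (sq_abs _).symm
            _ ≤ S ^ 2 := pow_le_pow_left₀ (abs_nonneg _) hsub 2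
      _ = (ENNReal.ofReal S) ^ 2 := by rw [ENNReal.ofReal_pow hS0]
      _ ≤ ((ENNReal.ofReal Cφ) ^ (1/2:ℝ) * (ENNReal.ofReal (CG ^ 2) * K) ^ (1/2:ℝ)) ^ 2 :=
          pow_le_pow_left₀ (zero_le) hSbound 2
      _ = ENNReal.ofReal (CG ^ 2 * Cφ) * K := by
          rw [mul_pow, ← ENNReal.rpow_natCast (_ ^ (1/2:ℝ)) 2,
            ← ENNReal.rpow_natCast ((ENNReal.ofReal (CG ^ 2) * K) ^ (1/2:ℝ)) 2,
            ← ENNReal.rpow_mul, ← ENNReal.rpow_mul]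
          norm_num
          rw [ENNReal.ofReal_mul (by positivity)]
          ring
  · -- non-integrable case: RHS is ⊤
    have hφuv : Measurable fun y => φ y * (u y - v y) := hφm.mul (hum.sub hvm)
    have htop : (∫⁻ y, ENNReal.ofReal |φ y| * ENNReal.ofReal |u y - v y| ∂μ) = ⊤ := by
      have : ¬ HasFiniteIntegral (fun y => φ y * (u y - v y)) μ := by
        intro hfin
        exact hint ⟨hφuv.aestronglyMeasurable, hfin⟩
      rw [hasFiniteIntegral_iff_norm] at this
      push_neg at this
      simp only [top_le_iff] at this
      rw [← this]
      · congr 1; funext y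
        rw [Real.norm_eq_abs, abs_mul, ENNReal.ofReal_mul (abs_nonneg _)]
    -- hence Q = ⊤
    have hPfin : (∫⁻ y, ENNReal.ofReal |φ y| ∂μ) ^ (1/2:ℝ) ≠ ⊤ :=
      ENNReal.rpow_ne_top_of_nonneg (by norm_num) (lt_of_le_of_lt hP ENNReal.ofReal_lt_top).ne
    have hQtop : (∫⁻ y, ENNReal.ofReal |φ y| * ENNReal.ofReal ((u y - v y) ^ 2) ∂μ) = ⊤ := by
      by_contra hQ
      have hlt : (∫⁻ y, ENNReal.ofReal |φ y| ∂μ) ^ (1/2:ℝ) *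
          (∫⁻ y, ENNReal.ofReal |φ y| * ENNReal.ofReal ((u y - v y) ^ 2) ∂μ) ^ (1/2:ℝ) < ⊤ :=
        ENNReal.mul_lt_top hPfin.lt_top
          (ENNReal.rpow_ne_top_of_nonneg (by norm_num) hQ).lt_top
      have := lt_of_le_of_lt hCS hlt
      rw [htop] at this
      exact absurd this (lt_irrefl ⊤)
    -- CG ≠ 0 and Cφ > 0
    have hCGne : CG ≠ 0 := by
      intro h0
      apply hint
      have : (fun y => φ y * (u y - v y)) = fun _ => 0 := by
        funext y
        have := huv y
        rw [h0, zero_mul] at this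
        have : u y - v y = 0 := abs_nonpos_iff.mp this
        rw [this, mul_zero]
      rw [this]
      exact integrable_zero _ _ _
    have hCφpos : 0 < Cφ := by
      rcases hCφ.lt_or_eq with h | h
      · exact h
      · exfalso
        apply hint
        have hφ0 : ∀ᵐ y ∂μ, φ y = 0 := by
          have h0 : (∫ y, |φ y| ∂μ) = 0 :=
            le_antisymm (h ▸ hφle) (integral_nonneg fun y => abs_nonneg _)
          have := (integral_eq_zero_iff_of_nonneg (fun y => abs_nonneg (φ y)) hφint.abs).mp h0
          filter_upwards [this] with y hy
          exact abs_eq_zero.mp (by simpa using hy)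
        refine (integrable_zero _ _ _).congr ?_
        filter_upwards [hφ0] with y hy
        rw [hy, zero_mul]
        rfl
    have hKtop : K = ⊤ := by
      by_contra hK'
      exact (ENNReal.mul_ne_top ENNReal.ofReal_ne_top hK')
        (top_le_iff.mp (hQtop ▸ hQle))
    have hcoeff : ENNReal.ofReal (CG ^ 2 * Cφ) ≠ 0 := by
      simp only [ne_eq, ENNReal.ofReal_eq_zero, not_le]
      have hCGpos : 0 < CG := hCG.lt_of_ne (Ne.symm hCGne)
      positivity
    rw [hKtop, ENNReal.mul_top hcoeff]
    exact le_top

/-- Under conditions (C2') and (C1') on the neural field kernel `w`, and with `G`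
`C_G`-Lipschitz, the map `F(h)(x) = ∫ w(x,y) G(h(y)) dy` is Lipschitz on the weighted
space `L²(ℝ^N, ρ_w)` with constant `C_G (Λ_w C_w)^{1/2}`. -/
theorem nonlocal_operator_lipschitz_weighted_L2
    {N : ℕ} (w : EuclideanSpace ℝ (Fin N) → EuclideanSpace ℝ (Fin N) → ℝ)
    (G : ℝ → ℝ) (CG Cw Λw : ℝ) (hCG : 0 ≤ CG) (hΛw : 0 < Λw)
    (ρw : EuclideanSpace ℝ (Fin N) → ℝ)
    (hwmeas : Measurable (Function.uncurry w))
    -- (C2')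
    (hC2' : ∀ x, Integrable (fun y => w x y) ∧ (∫ y, |w x y|) ≤ Cw)
    -- (C1')
    (hρpos : ∀ x, 0 ≤ ρw x) (hρint : Integrable ρw)
    (hρbdd : ∃ C, ∀ x, ρw x ≤ C)
    (hC1' : ∀ y, (∫ x, |w x y| * ρw x) ≤ Λw * ρw y)
    (hG : ∀ a b : ℝ, |G a - G b| ≤ CG * |a - b|)
    (g h : EuclideanSpace ℝ (Fin N) → ℝ)
    (hgmeas : Measurable g) (hhmeas : Measurable h)
    (hg : Integrable (fun x => (g x) ^ 2 * ρw x))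
    (hh : Integrable (fun x => (h x) ^ 2 * ρw x)) :
    Real.sqrt (∫ x, ((∫ y, w x y * G (g y)) - ∫ y, w x y * G (h y)) ^ 2 * ρw x) ≤
      CG * Real.sqrt (Λw * Cw) * Real.sqrt (∫ x, (g x - h x) ^ 2 * ρw x) := by
  classical
  have hCw : 0 ≤ Cw := le_trans (integral_nonneg fun y => abs_nonneg _) (hC2' 0).2
  have hGlip : LipschitzWith (Real.toNNReal CG) G := by
    apply LipschitzWith.of_dist_le_mul
    intro a b
    simpa [Real.dist_eq, Real.coe_toNNReal CG hCG] using hG a b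
  have hGmeas : Measurable G := hGlip.continuous.measurable
  -- measurable representative of ρw
  have hρaem : AEMeasurable ρw (volume : Measure (EuclideanSpace ℝ (Fin N))) :=
    hρint.aemeasurable
  set ρ : EuclideanSpace ℝ (Fin N) → ℝ := fun x => max (hρaem.mk ρw x) 0 with hρdef
  have hρm : Measurable ρ := hρaem.measurable_mk.max measurable_const
  have hρae : ρ =ᵐ[volume] ρw := by
    filter_upwards [hρaem.ae_eq_mk] with x hx
    rw [hρdef]
    simp only
    rw [← hx, max_eq_left (hρpos x)]
  have hρ0 : ∀ x, 0 ≤ ρ x := fun x => le_max_right _ _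
  have hρint' : Integrable ρ := hρint.congr hρae.symm
  -- A and B
  set A : EuclideanSpace ℝ (Fin N) → ℝ := fun x => ∫ y, w x y * G (g y) with hAdef
  set B : EuclideanSpace ℝ (Fin N) → ℝ := fun x => ∫ y, w x y * G (h y) with hBdef
  have hAm : Measurable A :=
    ((hwmeas.mul (hGmeas.comp (hgmeas.comp
      measurable_snd))).stronglyMeasurable.integral_prod_right').measurable
  have hBm : Measurable B :=
    ((hwmeas.mul (hGmeas.comp (hhmeas.comp
      measurable_snd))).stronglyMeasurable.integral_prod_right').measurable
  have hwx : ∀ x, Measurable (fun y => w x y) := fun x =>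
    hwmeas.comp (measurable_const.prodMk measurable_id)
  have hwy : ∀ y, Measurable (fun x => w x y) := fun y =>
    hwmeas.comp (measurable_id.prodMk measurable_const)
  -- lintegral bound from (C2')
  have hWle : ∀ x, (∫⁻ y, ENNReal.ofReal |w x y|) ≤ ENNReal.ofReal Cw := by
    intro x
    rw [← ofReal_integral_eq_lintegral_ofReal (hC2' x).1.abs
      (Filter.Eventually.of_forall fun y => abs_nonneg _)]
    exact ENNReal.ofReal_le_ofReal (hC2' x).2
  -- integrability of (g-h)^2 * ρ
  have hgh_ρw : Integrable (fun x => (g x - h x) ^ 2 * ρw x) := by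
    apply Integrable.mono' ((hg.const_mul 2).add (hh.const_mul 2))
    · exact (((hgmeas.sub hhmeas).pow_const 2).aemeasurable.mul hρaem).aestronglyMeasurable
    · refine Filter.Eventually.of_forall fun x => ?_
      rw [Real.norm_eq_abs, abs_of_nonneg (mul_nonneg (sq_nonneg _) (hρpos x))]
      have h1 : (g x - h x) ^ 2 ≤ 2 * g x ^ 2 + 2 * h x ^ 2 := by nlinarith [sq_nonneg (g x + h x)]
      show (g x - h x) ^ 2 * ρw x ≤ 2 * (g x ^ 2 * ρw x) + 2 * (h x ^ 2 * ρw x)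
      nlinarith [mul_le_mul_of_nonneg_right h1 (hρpos x)]
  have hghint' : Integrable (fun x => (g x - h x) ^ 2 * ρ x) :=
    hgh_ρw.congr (by filter_upwards [hρae] with x hx; rw [hx])
  -- pointwise bound
  have hpt : ∀ x, ENNReal.ofReal ((A x - B x) ^ 2 * ρ x) ≤
      ENNReal.ofReal (CG ^ 2 * Cw) *
        ((∫⁻ y, ENNReal.ofReal |w x y| * ENNReal.ofReal ((g y - h y) ^ 2)) *
          ENNReal.ofReal (ρ x)) := by
    intro x
    rw [ENNReal.ofReal_mul (sq_nonneg _)]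
    have h1 := aux_pointwise (μ := (volume : Measure (EuclideanSpace ℝ (Fin N)))) hCG (hwx x)
      (hGmeas.comp hgmeas) (hGmeas.comp hhmeas) (hgmeas.sub hhmeas)
      (hC2' x).1 (hC2' x).2 (fun y => hG (g y) (h y))
    calc ENNReal.ofReal ((A x - B x) ^ 2) * ENNReal.ofReal (ρ x)
        ≤ (ENNReal.ofReal (CG ^ 2 * Cw) *
            ∫⁻ y, ENNReal.ofReal |w x y| * ENNReal.ofReal ((g y - h y) ^ 2)) *
            ENNReal.ofReal (ρ x) := mul_le_mul_left h1 _
      _ = _ := by rw [mul_assoc]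
  -- step 1: integrate the pointwise bound
  have hstep1 : (∫⁻ x, ENNReal.ofReal ((A x - B x) ^ 2 * ρ x)) ≤
      ENNReal.ofReal (CG ^ 2 * Cw) *
        ∫⁻ x, (∫⁻ y, ENNReal.ofReal |w x y| * ENNReal.ofReal ((g y - h y) ^ 2)) *
          ENNReal.ofReal (ρ x) :=
    (lintegral_mono hpt).trans_eq (lintegral_const_mul' _ _ ENNReal.ofReal_ne_top)
  -- swap the order of integration
  have hswap : (∫⁻ x, (∫⁻ y, ENNReal.ofReal |w x y| * ENNReal.ofReal ((g y - h y) ^ 2)) *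
        ENNReal.ofReal (ρ x)) =
      ∫⁻ y, ENNReal.ofReal ((g y - h y) ^ 2) * ∫⁻ x, ENNReal.ofReal |w x y| *
        ENNReal.ofReal (ρ x) := by
    have hm : Measurable fun p : EuclideanSpace ℝ (Fin N) × EuclideanSpace ℝ (Fin N) =>
        ENNReal.ofReal |w p.1 p.2| * ENNReal.ofReal ((g p.2 - h p.2) ^ 2) *
          ENNReal.ofReal (ρ p.1) :=
      ((ENNReal.measurable_ofReal.comp hwmeas.abs).mul
        ((ENNReal.measurable_ofReal.comp ((hgmeas.sub hhmeas).pow_const 2)).comp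
          measurable_snd)).mul ((ENNReal.measurable_ofReal.comp hρm).comp measurable_fst)
    have e1 : ∀ x, (∫⁻ y, ENNReal.ofReal |w x y| * ENNReal.ofReal ((g y - h y) ^ 2)) *
        ENNReal.ofReal (ρ x) =
        ∫⁻ y, ENNReal.ofReal |w x y| * ENNReal.ofReal ((g y - h y) ^ 2) *
          ENNReal.ofReal (ρ x) := fun x =>
      (lintegral_mul_const' _ _ ENNReal.ofReal_ne_top).symm
    simp_rw [e1]
    rw [lintegral_lintegral_swap hm.aemeasurable]
    congr 1
    funext y
    rw [← lintegral_const_mul' (ENNReal.ofReal ((g y - h y) ^ 2)) _ ENNReal.ofReal_ne_top]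
    congr 1
    funext x
    ring
  -- a.e. bound for the inner integral via (C1')
  have h5meas : Measurable fun y => ∫⁻ x, ENNReal.ofReal |w x y| * ENNReal.ofReal (ρ x) := by
    apply Measurable.lintegral_prod_left
    exact (ENNReal.measurable_ofReal.comp hwmeas.abs).mul
      ((ENNReal.measurable_ofReal.comp hρm).comp measurable_fst)
  have hRfin : (∫⁻ x, ENNReal.ofReal (ρ x)) ≠ ⊤ := by
    rw [← ofReal_integral_eq_lintegral_ofReal hρint'
      (Filter.Eventually.of_forall fun x => hρ0 x)]
    exact ENNReal.ofReal_ne_top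
  have h5fin : (∫⁻ y, ∫⁻ x, ENNReal.ofReal |w x y| * ENNReal.ofReal (ρ x)) ≠ ⊤ := by
    have hm2 : AEMeasurable (Function.uncurry fun x y : EuclideanSpace ℝ (Fin N) =>
        ENNReal.ofReal |w x y| * ENNReal.ofReal (ρ x))
        ((volume : Measure (EuclideanSpace ℝ (Fin N))).prod volume) :=
      ((ENNReal.measurable_ofReal.comp hwmeas.abs).mul
        ((ENNReal.measurable_ofReal.comp hρm).comp measurable_fst)).aemeasurable
    rw [← lintegral_lintegral_swap hm2]
    have : (∫⁻ x, ∫⁻ y, ENNReal.ofReal |w x y| * ENNReal.ofReal (ρ x)) ≤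
        ENNReal.ofReal Cw * ∫⁻ x, ENNReal.ofReal (ρ x) := by
      calc (∫⁻ x, ∫⁻ y, ENNReal.ofReal |w x y| * ENNReal.ofReal (ρ x))
          = ∫⁻ x, (∫⁻ y, ENNReal.ofReal |w x y|) * ENNReal.ofReal (ρ x) := by
            congr 1; funext x
            exact lintegral_mul_const' _ _ ENNReal.ofReal_ne_top
        _ ≤ ∫⁻ x, ENNReal.ofReal Cw * ENNReal.ofReal (ρ x) :=
            lintegral_mono fun x => mul_le_mul_left (hWle x) _
        _ = ENNReal.ofReal Cw * ∫⁻ x, ENNReal.ofReal (ρ x) :=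
            lintegral_const_mul' _ _ ENNReal.ofReal_ne_top
    exact (lt_of_le_of_lt this (ENNReal.mul_lt_top ENNReal.ofReal_lt_top
      hRfin.lt_top)).ne
  have h5 : ∀ᵐ y ∂(volume : Measure (EuclideanSpace ℝ (Fin N))),
      (∫⁻ x, ENNReal.ofReal |w x y| * ENNReal.ofReal (ρ x)) ≤ ENNReal.ofReal (Λw * ρ y) := by
    filter_upwards [ae_lt_top h5meas h5fin, hρae] with y hy hyρ
    have hint : Integrable (fun x => |w x y| * ρ x) := by
      refine ⟨((hwy y).abs.mul hρm).aestronglyMeasurable, ?_⟩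
      rw [hasFiniteIntegral_iff_norm]
      have e : ∀ x, ENNReal.ofReal ‖|w x y| * ρ x‖ =
          ENNReal.ofReal |w x y| * ENNReal.ofReal (ρ x) := by
        intro x
        rw [Real.norm_eq_abs, abs_of_nonneg (mul_nonneg (abs_nonneg _) (hρ0 x)),
          ENNReal.ofReal_mul (abs_nonneg _)]
      simp_rw [e]
      exact hy
    have e2 : (∫⁻ x, ENNReal.ofReal |w x y| * ENNReal.ofReal (ρ x)) =
        ENNReal.ofReal (∫ x, |w x y| * ρ x) := by
      rw [ofReal_integral_eq_lintegral_ofReal hint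
        (Filter.Eventually.of_forall fun x => mul_nonneg (abs_nonneg _) (hρ0 x))]
      congr 1; funext x; rw [ENNReal.ofReal_mul (abs_nonneg _)]
    rw [e2]
    apply ENNReal.ofReal_le_ofReal
    rw [hyρ]
    calc (∫ x, |w x y| * ρ x) = ∫ x, |w x y| * ρw x :=
          integral_congr_ae (by filter_upwards [hρae] with x hx; rw [hx])
      _ ≤ Λw * ρw y := hC1' y
  -- step 6
  have h6 : (∫⁻ y, ENNReal.ofReal ((g y - h y) ^ 2) *
        ∫⁻ x, ENNReal.ofReal |w x y| * ENNReal.ofReal (ρ x)) ≤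
      ENNReal.ofReal Λw * ∫⁻ y, ENNReal.ofReal ((g y - h y) ^ 2) * ENNReal.ofReal (ρ y) := by
    calc (∫⁻ y, ENNReal.ofReal ((g y - h y) ^ 2) *
          ∫⁻ x, ENNReal.ofReal |w x y| * ENNReal.ofReal (ρ x))
        ≤ ∫⁻ y, ENNReal.ofReal ((g y - h y) ^ 2) * ENNReal.ofReal (Λw * ρ y) :=
          lintegral_mono_ae (h5.mono fun y hy => mul_le_mul_right hy _)
      _ = ∫⁻ y, ENNReal.ofReal Λw *
            (ENNReal.ofReal ((g y - h y) ^ 2) * ENNReal.ofReal (ρ y)) := by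
          congr 1; funext y; rw [ENNReal.ofReal_mul hΛw.le]; ring
      _ = ENNReal.ofReal Λw * ∫⁻ y, ENNReal.ofReal ((g y - h y) ^ 2) * ENNReal.ofReal (ρ y) :=
          lintegral_const_mul' _ _ ENNReal.ofReal_ne_top
  -- step 7
  set I := ∫ x, (g x - h x) ^ 2 * ρw x with hIdef
  have hI0 : 0 ≤ I := integral_nonneg fun x => mul_nonneg (sq_nonneg _) (hρpos x)
  have h7 : (∫⁻ y, ENNReal.ofReal ((g y - h y) ^ 2) * ENNReal.ofReal (ρ y)) =
      ENNReal.ofReal I := by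
    have : I = ∫ x, (g x - h x) ^ 2 * ρ x :=
      integral_congr_ae (by filter_upwards [hρae] with x hx; rw [hx])
    rw [this, ofReal_integral_eq_lintegral_ofReal hghint'
      (Filter.Eventually.of_forall fun x => mul_nonneg (sq_nonneg _) (hρ0 x))]
    congr 1; funext y; rw [ENNReal.ofReal_mul (sq_nonneg _)]
  -- combine everything
  have hchain : (∫⁻ x, ENNReal.ofReal ((A x - B x) ^ 2 * ρ x)) ≤
      ENNReal.ofReal (CG ^ 2 * (Λw * Cw) * I) := by
    calc (∫⁻ x, ENNReal.ofReal ((A x - B x) ^ 2 * ρ x))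
        ≤ ENNReal.ofReal (CG ^ 2 * Cw) *
          ∫⁻ x, (∫⁻ y, ENNReal.ofReal |w x y| * ENNReal.ofReal ((g y - h y) ^ 2)) *
            ENNReal.ofReal (ρ x) := hstep1
      _ = ENNReal.ofReal (CG ^ 2 * Cw) *
          ∫⁻ y, ENNReal.ofReal ((g y - h y) ^ 2) *
            ∫⁻ x, ENNReal.ofReal |w x y| * ENNReal.ofReal (ρ x) := by rw [hswap]
      _ ≤ ENNReal.ofReal (CG ^ 2 * Cw) * (ENNReal.ofReal Λw *
            ∫⁻ y, ENNReal.ofReal ((g y - h y) ^ 2) * ENNReal.ofReal (ρ y)) :=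
          mul_le_mul_right h6 _
      _ = ENNReal.ofReal (CG ^ 2 * (Λw * Cw) * I) := by
          rw [h7, ← ENNReal.ofReal_mul hΛw.le, ← ENNReal.ofReal_mul (by positivity)]
          congr 1
          ring
  -- pass to real integrals
  have hLR : (∫ x, (A x - B x) ^ 2 * ρw x) ≤ CG ^ 2 * (Λw * Cw) * I := by
    have heq : (∫ x, (A x - B x) ^ 2 * ρw x) =
        ((∫⁻ x, ENNReal.ofReal ((A x - B x) ^ 2 * ρ x))).toReal := by
      rw [show (∫ x, (A x - B x) ^ 2 * ρw x) = ∫ x, (A x - B x) ^ 2 * ρ x from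
        integral_congr_ae (by filter_upwards [hρae] with x hx; rw [hx]),
        integral_eq_lintegral_of_nonneg_ae (f := fun x => (A x - B x) ^ 2 * ρ x)
          (Filter.Eventually.of_forall fun x => mul_nonneg (sq_nonneg _) (hρ0 x))
          ((((hAm.sub hBm).pow_const 2).mul hρm).aestronglyMeasurable)]
    rw [heq]
    calc ((∫⁻ x, ENNReal.ofReal ((A x - B x) ^ 2 * ρ x))).toReal
        ≤ (ENNReal.ofReal (CG ^ 2 * (Λw * Cw) * I)).toReal :=
          ENNReal.toReal_mono ENNReal.ofReal_ne_top hchain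
      _ = CG ^ 2 * (Λw * Cw) * I := ENNReal.toReal_ofReal
          (mul_nonneg (mul_nonneg (sq_nonneg _) (mul_nonneg hΛw.le hCw)) hI0)
  calc Real.sqrt (∫ x, (A x - B x) ^ 2 * ρw x)
      ≤ Real.sqrt (CG ^ 2 * (Λw * Cw) * I) := Real.sqrt_le_sqrt hLR
    _ = CG * Real.sqrt (Λw * Cw) * Real.sqrt I := by
        rw [Real.sqrt_mul (mul_nonneg (sq_nonneg CG) (mul_nonneg hΛw.le hCw)) I,
          Real.sqrt_mul (sq_nonneg CG), Real.sqrt_sq hCG]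
end

section
/- There exists a measurable function w : ℝ × ℝ → ℝ, namely w(x,y) = (1+|x|)^{-1}(1+|y|)^{-1}, such that ∫∫ |w(x,y)|² dx dy < ∞ but the function x ↦ ‖w(x,·)‖_{L¹(ℝ)} is not in L²(ℝ). Consequently, the operator h ↦ (x ↦ ∫ w(x,y) dy) applied to the constant function G ≡ 1 does not produce an element of L²(ℝ). -/
open MeasureTheory ENNReal

private lemma pos_aux (x : ℝ) : (0:ℝ) < (1 + |x|)⁻¹ :=
  inv_pos.2 (by positivity)

private lemma meas_aux : Measurable fun y : ℝ => (1 + |y|)⁻¹ :=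
  (measurable_const.add measurable_abs).inv

private lemma not_int_aux : ¬ Integrable (fun y : ℝ => (1 + |y|)⁻¹) := by
  intro h
  have hrpow : ¬ IntegrableOn (fun x : ℝ => x ^ (-1 : ℝ)) (Set.Ioi 1) := by
    rw [integrableOn_Ioi_rpow_iff zero_lt_one]
    norm_num
  apply hrpow
  have h1 : IntegrableOn (fun y : ℝ => 2 * (1 + |y|)⁻¹) (Set.Ioi 1) :=
    (h.const_mul 2).integrableOn
  apply h1.mono'
  · exact ((measurable_id.pow_const _).aestronglyMeasurable :
      AEStronglyMeasurable (fun x : ℝ => x ^ (-1:ℝ)) _).restrict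
  · filter_upwards [ae_restrict_mem measurableSet_Ioi] with y (hy : 1 < y)
    have hy0 : 0 < y := lt_trans one_pos hy
    rw [Real.rpow_neg_one, Real.norm_eq_abs, abs_of_pos (inv_pos.2 hy0)]
    rw [abs_of_pos hy0]
    have h3 : (2*y)⁻¹ ≤ (1+y)⁻¹ := inv_anti₀ (by linarith) (by linarith)
    calc y⁻¹ = 2 * (2*y)⁻¹ := by field_simp
      _ ≤ 2 * (1+y)⁻¹ := by linarith

private lemma lint_top : ∫⁻ y : ℝ, ENNReal.ofReal ((1 + |y|)⁻¹) = ⊤ := by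
  by_contra hne
  apply not_int_aux
  refine ⟨meas_aux.aestronglyMeasurable, ?_⟩
  rw [hasFiniteIntegral_iff_ofReal (Filter.Eventually.of_forall fun y => (pos_aux y).le)]
  exact lt_top_iff_ne_top.2 hne

/-- The kernel `w(x,y) = (1+|x|)⁻¹ (1+|y|)⁻¹` is square-integrable on `ℝ × ℝ`, yet
`x ↦ ‖w(x,·)‖_{L¹(ℝ)}` is not in `L²(ℝ)` (its square has infinite integral); hence the
nonlocal operator applied to `G ≡ 1` does not produce an element of `L²(ℝ)`. -/
theorem C1_does_not_imply_stability_counterexample :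
    ∃ w : ℝ → ℝ → ℝ,
      (∀ x y, w x y = (1 + |x|)⁻¹ * (1 + |y|)⁻¹) ∧
      Measurable (Function.uncurry w) ∧
      Integrable (fun p : ℝ × ℝ => |w p.1 p.2| ^ 2) ∧
      ∫⁻ x, (∫⁻ y, ENNReal.ofReal |w x y|) ^ 2 = ⊤ := by
  refine ⟨fun x y => (1 + |x|)⁻¹ * (1 + |y|)⁻¹, fun _ _ => rfl, ?_, ?_, ?_⟩
  · exact (meas_aux.comp measurable_fst).mul (meas_aux.comp measurable_snd)
  · -- square integrability
    have hsq : Integrable (fun x : ℝ => ((1 + |x|)⁻¹) ^ 2) := by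
      apply integrable_inv_one_add_sq.mono'
        ((meas_aux.pow_const 2).aestronglyMeasurable)
      filter_upwards with x
      rw [Real.norm_eq_abs, abs_of_pos (by positivity)]
      rw [inv_pow, inv_le_inv₀ (by positivity) (by positivity)]
      nlinarith [abs_nonneg x, sq_abs x]
    have := hsq.mul_prod hsq
    apply this.congr
    filter_upwards with p
    rw [abs_of_pos (mul_pos (pos_aux p.1) (pos_aux p.2))]
    ring
  · -- the L² norm of x ↦ ‖w(x,·)‖_{L¹} is infinite
    have key : ∀ x : ℝ, (∫⁻ y, ENNReal.ofReal |(1 + |x|)⁻¹ * (1 + |y|)⁻¹|) = ⊤ := by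
      intro x
      have : ∀ y : ℝ, ENNReal.ofReal |(1 + |x|)⁻¹ * (1 + |y|)⁻¹|
          = ENNReal.ofReal ((1 + |x|)⁻¹) * ENNReal.ofReal ((1 + |y|)⁻¹) := by
        intro y
        rw [abs_of_pos (mul_pos (pos_aux x) (pos_aux y)),
          ENNReal.ofReal_mul (pos_aux x).le]
      simp_rw [this]
      rw [lintegral_const_mul _ (meas_aux.ennreal_ofReal), lint_top,
        ENNReal.mul_top (by simp [ENNReal.ofReal_eq_zero, not_le.2 (pos_aux x)])]
    simp_rw [key]
    simp [lintegral_const]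
end

section
/- Let w : ℝ^N → ℝ be continuous with w ∈ L¹(ℝ^N) and ∫ |x|^{2N} |w(x)| dx < ∞. Then there exists a non-negative, non-zero function ρ ∈ L¹(ℝ^N) ∩ L^∞(ℝ^N) and a constant Λ_w = ‖w‖_{L¹} + 1 such that ∫_{ℝ^N} |w(x − y)| ρ(x) dx ≤ Λ_w ρ(y) for all y ∈ ℝ^N. -/
open MeasureTheory

/-- Example 2 of Section 2.4: if `w : ℝ^N → ℝ` is continuous, integrable and satisfies
`∫ |x|^{2N} |w(x)| dx < ∞`, then there is a non-negative, non-zero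
`ρ ∈ L¹(ℝ^N) ∩ L^∞(ℝ^N)` such that, with `Λ_w = ‖w‖_{L¹} + 1`,
`∫ |w(x−y)| ρ(x) dx ≤ Λ_w ρ(y)` for all `y` (condition (C1') for homogeneous kernels). -/
theorem homogeneous_kernel_satisfies_C1'
    {N : ℕ} (hN : 0 < N) (w : EuclideanSpace ℝ (Fin N) → ℝ)
    (hwcont : Continuous w) (hwint : Integrable w)
    (hmoment : Integrable (fun x => ‖x‖ ^ (2 * N) * |w x|)) :
    ∃ ρ : EuclideanSpace ℝ (Fin N) → ℝ,
      Integrable ρ ∧ (∃ C, ∀ x, ρ x ≤ C) ∧ (∀ x, 0 ≤ ρ x) ∧ (∃ x, ρ x ≠ 0) ∧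
      ∀ y, (∫ x, |w (x - y)| * ρ x) ≤ ((∫ x, |w x|) + 1) * ρ y := by
  set m := 2 * N with hm
  have hbound_int : Integrable
      (fun u : EuclideanSpace ℝ (Fin N) => (2:ℝ)^m * (|w u| + ‖u‖^m * |w u|)) :=
    (hwint.abs.add hmoment).const_mul _
  -- pointwise bound for all ε ∈ (0,1]
  have key : ∀ ε : ℝ, 0 < ε → ε ≤ 1 → ∀ u : EuclideanSpace ℝ (Fin N),
      |w u| * (1 + ε * ‖u‖)^m ≤ (2:ℝ)^m * (|w u| + ‖u‖^m * |w u|) := by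
    intro ε hε hε1 u
    have hεu : (0:ℝ) ≤ ε * ‖u‖ := mul_nonneg hε.le (norm_nonneg u)
    have h1 : (1 + ε * ‖u‖)^m ≤ (2:ℝ)^m * (1 + ‖u‖^m) := by
      have h2 : (1 + ε * ‖u‖) ≤ 2 * max 1 ‖u‖ := by
        have hεu : ε * ‖u‖ ≤ ‖u‖ := by nlinarith [norm_nonneg u]
        have h3 : (1:ℝ) ≤ max 1 ‖u‖ := le_max_left _ _
        have h4 : ‖u‖ ≤ max 1 ‖u‖ := le_max_right _ _
        linarith
      calc (1 + ε * ‖u‖)^m ≤ (2 * max 1 ‖u‖)^m :=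
            pow_le_pow_left₀ (by linarith) h2 m
        _ = (2:ℝ)^m * (max 1 ‖u‖)^m := mul_pow _ _ _
        _ ≤ (2:ℝ)^m * (1 + ‖u‖^m) := by
            refine mul_le_mul_of_nonneg_left ?_ (by positivity)
            rcases le_total ‖u‖ 1 with h | h
            · rw [max_eq_left h]
              simp only [one_pow]
              linarith [pow_nonneg (norm_nonneg u) m]
            · rw [max_eq_right h]
              nlinarith [pow_nonneg (norm_nonneg u) m]
    calc |w u| * (1 + ε * ‖u‖)^m ≤ |w u| * ((2:ℝ)^m * (1 + ‖u‖^m)) :=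
          mul_le_mul_of_nonneg_left h1 (abs_nonneg _)
      _ = (2:ℝ)^m * (|w u| + ‖u‖^m * |w u|) := by ring
  have hcont : ∀ ε : ℝ, Continuous
      (fun u : EuclideanSpace ℝ (Fin N) => |w u| * (1 + ε * ‖u‖)^m) := by
    intro ε
    exact (hwcont.abs).mul ((continuous_const.add (continuous_const.mul continuous_norm)).pow m)
  have hFint : ∀ ε : ℝ, 0 < ε → ε ≤ 1 → Integrable
      (fun u : EuclideanSpace ℝ (Fin N) => |w u| * (1 + ε * ‖u‖)^m) := by
    intro ε hε hε1
    refine hbound_int.mono' ((hcont ε).aestronglyMeasurable) ?_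
    filter_upwards with u
    rw [Real.norm_eq_abs, abs_of_nonneg (mul_nonneg (abs_nonneg _) (pow_nonneg
      (by nlinarith [mul_nonneg hε.le (norm_nonneg u)]) m))]
    exact key ε hε hε1 u
  have hεn1 : ∀ k : ℕ, ((k:ℝ)+1)⁻¹ ≤ 1 := by
    intro k
    rw [inv_le_one_iff₀]
    right; linarith [Nat.cast_nonneg (α := ℝ) k]
  -- dominated convergence
  have hDCT : Filter.Tendsto
      (fun k : ℕ => ∫ u : EuclideanSpace ℝ (Fin N), |w u| * (1 + ((k:ℝ)+1)⁻¹ * ‖u‖)^m)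
      Filter.atTop (nhds (∫ u : EuclideanSpace ℝ (Fin N), |w u|)) := by
    apply MeasureTheory.tendsto_integral_of_dominated_convergence
      (fun u => (2:ℝ)^m * (|w u| + ‖u‖^m * |w u|))
    · intro k
      exact (hcont _).aestronglyMeasurable
    · exact hbound_int
    · intro k
      filter_upwards with u
      rw [Real.norm_eq_abs, abs_of_nonneg (by positivity)]
      exact key _ (by positivity) (hεn1 k) u
    · filter_upwards with u
      have h1 : Filter.Tendsto (fun k : ℕ => ((k:ℝ)+1)⁻¹) Filter.atTop (nhds 0) :=
        tendsto_one_div_add_atTop_nhds_zero_nat.congr (fun k => by rw [one_div])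
      have h2 : Filter.Tendsto (fun k : ℕ => |w u| * (1 + ((k:ℝ)+1)⁻¹ * ‖u‖)^m)
          Filter.atTop (nhds (|w u| * (1 + 0 * ‖u‖)^m)) :=
        Filter.Tendsto.const_mul _ (((h1.mul_const _).const_add 1).pow m)
      simpa using h2
  have hev : ∀ᶠ k : ℕ in Filter.atTop,
      (∫ u : EuclideanSpace ℝ (Fin N), |w u| * (1 + ((k:ℝ)+1)⁻¹ * ‖u‖)^m)
        ≤ (∫ u : EuclideanSpace ℝ (Fin N), |w u|) + 1 :=
    hDCT.eventually (eventually_le_nhds (lt_add_one _))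
  obtain ⟨n, hn⟩ := hev.exists
  set ε : ℝ := ((n:ℝ)+1)⁻¹ with hεdef
  have hε : 0 < ε := by rw [hεdef]; positivity
  have hε1 : ε ≤ 1 := hεn1 n
  -- the weight function
  set ρ : EuclideanSpace ℝ (Fin N) → ℝ := fun y => ((1 + ε * ‖y‖)^m)⁻¹ with hρdef
  have hρpos : ∀ y : EuclideanSpace ℝ (Fin N), 0 < (1 + ε * ‖y‖)^m := fun y =>
    pow_pos (add_pos_of_pos_of_nonneg one_pos (mul_nonneg hε.le (norm_nonneg y))) m
  have hρnonneg : ∀ y, 0 ≤ ρ y := fun y => inv_nonneg.mpr (hρpos y).le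
  refine ⟨ρ, ?_, ⟨1, ?_⟩, hρnonneg, ⟨0, ?_⟩, ?_⟩
  · -- integrability of ρ
    have hdim : ((Module.finrank ℝ (EuclideanSpace ℝ (Fin N))) : ℝ) < (m : ℝ) := by
      simp only [finrank_euclideanSpace, Fintype.card_fin, hm]
      push_cast
      have : (0:ℝ) < N := by exact_mod_cast hN
      linarith
    have hint1 : Integrable (fun x : EuclideanSpace ℝ (Fin N) => (1 + ‖x‖) ^ (-(m:ℝ))) :=
      integrable_one_add_norm hdim
    have hint2 : Integrable (fun x : EuclideanSpace ℝ (Fin N) =>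
        ((ε:ℝ)^m)⁻¹ * ((1 + ‖x‖)^m)⁻¹) := by
      refine (hint1.const_mul (((ε:ℝ)^m)⁻¹)).congr ?_
      filter_upwards with x
      rw [Real.rpow_neg (by positivity), Real.rpow_natCast]
    have hρcont : Continuous ρ :=
      ((continuous_const.add (continuous_const.mul continuous_norm)).pow m).inv₀
        (fun y => (hρpos y).ne')
    refine hint2.mono' hρcont.aestronglyMeasurable ?_
    filter_upwards with x
    rw [Real.norm_eq_abs, abs_of_nonneg (hρnonneg x)]
    show ((1 + ε * ‖x‖)^m)⁻¹ ≤ ((ε:ℝ)^m)⁻¹ * ((1 + ‖x‖)^m)⁻¹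
    have h5 : ε^m * (1 + ‖x‖)^m ≤ (1 + ε * ‖x‖)^m := by
      rw [← mul_pow]
      apply pow_le_pow_left₀ (by nlinarith [norm_nonneg x, hε.le])
      nlinarith [norm_nonneg x]
    rw [← mul_inv]
    exact inv_anti₀ (by positivity) h5
  · intro x
    show ((1 + ε * ‖x‖)^m)⁻¹ ≤ 1
    refine inv_le_one_of_one_le₀ (one_le_pow₀ ?_)
    nlinarith [norm_nonneg x, hε]
  · show ((1 + ε * ‖(0 : EuclideanSpace ℝ (Fin N))‖)^m)⁻¹ ≠ 0
    simp
  · intro y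
    have hg_int : Integrable (fun x : EuclideanSpace ℝ (Fin N) =>
        |w (x - y)| * (1 + ε * ‖x - y‖)^m * ρ y) :=
      ((hFint ε hε hε1).comp_sub_right y).mul_const _
    have hpt : ∀ x : EuclideanSpace ℝ (Fin N),
        |w (x - y)| * ρ x ≤ |w (x - y)| * (1 + ε * ‖x - y‖)^m * ρ y := by
      intro x
      have hABC : (1 + ε * ‖y‖)^m ≤ (1 + ε * ‖x‖)^m * (1 + ε * ‖x - y‖)^m := by
        rw [← mul_pow]
        apply pow_le_pow_left₀ (by nlinarith [norm_nonneg y, hε.le])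
        have hx : ‖y‖ ≤ ‖x‖ + ‖x - y‖ := by
          have := norm_sub_le x (x - y)
          simpa using this
        nlinarith [mul_le_mul_of_nonneg_left hx hε.le,
          mul_nonneg (mul_nonneg hε.le (norm_nonneg x)) (mul_nonneg hε.le (norm_nonneg (x - y)))]
      have hρxy : ρ x ≤ (1 + ε * ‖x - y‖)^m * ρ y := by
        have hA := hρpos x
        have hB := hρpos y
        have hC : (0:ℝ) < (1 + ε * ‖x - y‖)^m := by positivity
        show ((1 + ε * ‖x‖)^m)⁻¹ ≤ (1 + ε * ‖x - y‖)^m * ((1 + ε * ‖y‖)^m)⁻¹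
        have heq : ((1 + ε * ‖x‖)^m)⁻¹ =
            (1 + ε * ‖x - y‖)^m * ((1 + ε * ‖x‖)^m * (1 + ε * ‖x - y‖)^m)⁻¹ := by
          field_simp
        rw [heq]
        exact mul_le_mul_of_nonneg_left (inv_anti₀ hB hABC) hC.le
      calc |w (x - y)| * ρ x ≤ |w (x - y)| * ((1 + ε * ‖x - y‖)^m * ρ y) :=
            mul_le_mul_of_nonneg_left hρxy (abs_nonneg _)
        _ = |w (x - y)| * (1 + ε * ‖x - y‖)^m * ρ y := by ring
    calc (∫ x, |w (x - y)| * ρ x)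
        ≤ ∫ x, |w (x - y)| * (1 + ε * ‖x - y‖)^m * ρ y :=
          integral_mono_of_nonneg
            (Filter.Eventually.of_forall fun x => mul_nonneg (abs_nonneg _) (hρnonneg x))
            hg_int (Filter.Eventually.of_forall hpt)
      _ = (∫ x, |w (x - y)| * (1 + ε * ‖x - y‖)^m) * ρ y :=
          integral_mul_const _ _
      _ = (∫ u, |w u| * (1 + ε * ‖u‖)^m) * ρ y := by
          rw [integral_sub_right_eq_self (fun u => |w u| * (1 + ε * ‖u‖)^m) y]
      _ ≤ ((∫ x, |w x|) + 1) * ρ y :=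
          mul_le_mul_of_nonneg_right hn (hρnonneg y)
end
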